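/- Let f : ℝ → ℝ be differentiable and strictly convex with Bregman divergence D_f(x, y) = f(x) − f(y) − f'(y)(x − y), and let x_1, …, x_n be real numbers (n ≥ 1) with arithmetic mean μ = (1/n) ∑_{ℓ=1}^{n} x_ℓ. Then for every real c, ∑_{ℓ=1}^{n} D_f(x_ℓ, μ) ≤ ∑_{ℓ=1}^{n} D_f(x_ℓ, c), with equality if and only if c = μ. That is, the arithmetic mean is the unique minimizer of the summed Bregman divergence to a multiset of points. -/

import Mathlib

/-- The Bregman divergence induced by `f`: `D_f(x, y) = f x − f y − f'(y)(x − y)`. -/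
noncomputable def bregman (f : ℝ → ℝ) (x y : ℝ) : ℝ :=
  f x - f y - deriv f y * (x - y)

lemma bregman_pos (f : ℝ → ℝ) (hdiff : Differentiable ℝ f)
    (hconv : StrictConvexOn ℝ Set.univ f) {a b : ℝ} (hab : a ≠ b) :
    0 < bregman f a b := by
  rcases lt_or_gt_of_ne hab with h | h
  · have := hconv.slope_lt_deriv (Set.mem_univ a) (Set.mem_univ b) h (hdiff b)
    rw [slope_def_field, div_lt_iff₀ (by linarith)] at this
    unfold bregman; nlinarith
  · have := hconv.deriv_lt_slope (Set.mem_univ b) (Set.mem_univ a) h (hdiff b)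
    rw [slope_def_field, lt_div_iff₀ (by linarith)] at this
    unfold bregman; nlinarith

lemma sum_bregman (f : ℝ → ℝ) (n : ℕ) (x : ℕ → ℝ) (y : ℝ) :
    ∑ ℓ ∈ Finset.Icc 1 n, bregman f (x ℓ) y
      = (∑ ℓ ∈ Finset.Icc 1 n, f (x ℓ)) - n * f y
        - deriv f y * ((∑ ℓ ∈ Finset.Icc 1 n, x ℓ) - n * y) := by
  simp only [bregman, Finset.sum_sub_distrib, Finset.sum_const, Nat.card_Icc,
    nsmul_eq_mul, mul_sub, Finset.mul_sum, Finset.sum_sub_distrib]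
  push_cast
  ring

theorem bregman_mean_unique_minimizer (f : ℝ → ℝ) (hdiff : Differentiable ℝ f)
    (hconv : StrictConvexOn ℝ Set.univ f) (n : ℕ) (hn : 1 ≤ n) (x : ℕ → ℝ)
    (μ : ℝ) (hμ : μ = (∑ ℓ ∈ Finset.Icc 1 n, x ℓ) / (n : ℝ)) (c : ℝ) :
    (∑ ℓ ∈ Finset.Icc 1 n, bregman f (x ℓ) μ
        ≤ ∑ ℓ ∈ Finset.Icc 1 n, bregman f (x ℓ) c) ∧
    ((∑ ℓ ∈ Finset.Icc 1 n, bregman f (x ℓ) μ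
        = ∑ ℓ ∈ Finset.Icc 1 n, bregman f (x ℓ) c) ↔ c = μ) := by
  have hn0 : (n : ℝ) ≠ 0 := by positivity
  have hS : (∑ ℓ ∈ Finset.Icc 1 n, x ℓ) = n * μ := by
    rw [hμ]; field_simp
  have key : ∑ ℓ ∈ Finset.Icc 1 n, bregman f (x ℓ) c
      - ∑ ℓ ∈ Finset.Icc 1 n, bregman f (x ℓ) μ = n * bregman f μ c := by
    rw [sum_bregman, sum_bregman, hS]
    unfold bregman; ring
  have hnpos : (0:ℝ) < n := by positivity
  by_cases hcμ : c = μ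
  · subst hcμ
    exact ⟨le_refl _, by simp⟩
  · have hpos : 0 < bregman f μ c := bregman_pos f hdiff hconv (Ne.symm hcμ)
    constructor
    · nlinarith
    · constructor
      · intro h; exfalso; nlinarith
      · intro h; exact absurd h hcμ
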